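/- Let (X, ‖·‖, ‖·‖_L) be a Lip-space and let X' be the Banach dual of (X, ‖·‖) with dual norm ‖·‖'. For ξ, η ∈ X' set d(ξ,η) = sup_{x : ‖x‖_L ≤ 1} |ξ(x) − η(x)| (a finite-valued metric on X'). Then on the closed unit ball B₁' = {ξ ∈ X' : ‖ξ‖' ≤ 1} the topology induced by the metric d coincides with the weak* topology; equivalently, the identity map from B₁' with the (subspace) weak* topology to B₁' with the metric d is a homeomorphism. -/

import Mathlib

open scoped ENNReal

/-- A Lip-space: a real Banach space `X` together with an extended-real-valued "Lip-norm"
`lipNorm : X → [0,∞]` which is finite on a dense linear subspace on which it is a norm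
(subadditive, absolutely homogeneous, vanishing only at `0`), and whose unit ball
`{x : X | lipNorm x ≤ 1}` is compact in the norm topology of `X`. -/
structure LipSpace (X : Type*) [NormedAddCommGroup X] [NormedSpace ℝ X] [CompleteSpace X] where
  lipNorm : X → ℝ≥0∞
  lipNorm_add_le : ∀ x y : X, lipNorm (x + y) ≤ lipNorm x + lipNorm y
  lipNorm_smul : ∀ (c : ℝ) (x : X), lipNorm (c • x) = (‖c‖₊ : ℝ≥0∞) * lipNorm x
  lipNorm_eq_zero : ∀ x : X, lipNorm x = 0 → x = 0
  dense_finite : Dense {x : X | lipNorm x < ⊤}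
  isCompact_unitBall : IsCompact {x : X | lipNorm x ≤ 1}

/-- A set is open in `generateFrom g` if each of its points has a generating
neighbourhood inside it. -/
theorem genOpen_of_forall {α : Type*} {g : Set (Set α)} {s : Set α}
    (h : ∀ a ∈ s, ∃ t ∈ g, a ∈ t ∧ t ⊆ s) :
    (TopologicalSpace.generateFrom g).IsOpen s := by
  have hs : s = ⋃₀ {t | t ∈ g ∧ t ⊆ s} := by
    apply Set.Subset.antisymm
    · intro a ha
      obtain ⟨t, htg, hat, hts⟩ := h a ha
      exact ⟨t, ⟨htg, hts⟩, hat⟩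
    · rintro a ⟨t, ⟨-, hts⟩, hat⟩
      exact hts hat
  rw [hs]
  exact TopologicalSpace.GenerateOpen.sUnion _ fun t ht =>
    TopologicalSpace.GenerateOpen.basic t ht.1

/-- A set is open in the induced topology if each of its points has an open
neighbourhood downstairs whose preimage is inside it. -/
theorem inducedOpen_of_forall {α β : Type*} [tβ : TopologicalSpace β] {f : α → β} {s : Set α}
    (h : ∀ a ∈ s, ∃ V, IsOpen V ∧ f a ∈ V ∧ f ⁻¹' V ⊆ s) :
    (TopologicalSpace.induced f tβ).IsOpen s := by
  choose V hVo hVm hVs using h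
  refine ⟨⋃ (a : α) (ha : a ∈ s), V a ha,
    isOpen_iUnion fun a => isOpen_iUnion fun ha => hVo a ha, ?_⟩
  ext b
  simp only [Set.mem_preimage, Set.mem_iUnion]
  constructor
  · rintro ⟨a, ha, hb⟩
    exact hVs a ha hb
  · intro hb
    exact ⟨b, hb, hVm b hb⟩

/-- For a Lip-space `(X, ‖·‖, ‖·‖_L)`, consider on the dual `X'` the
(finite-valued) metric `d(ξ,η) = sup_{‖x‖_L ≤ 1} |ξ x − η x|`.  On the closed unit ball
`B₁' = {ξ : ‖ξ‖' ≤ 1}` of `X'` the topology induced by `d` coincides with the weak*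
topology: the (subspace) weak* topology on `B₁'` equals the topology generated by the
open `d`-balls. -/
theorem stmt2 {X : Type*} [NormedAddCommGroup X] [NormedSpace ℝ X] [CompleteSpace X]
    (S : LipSpace X) :
    TopologicalSpace.induced
        (fun ξ : {ξ : X →L[ℝ] ℝ // ‖ξ‖ ≤ 1} => StrongDual.toWeakDual ξ.1)
        inferInstance =
      TopologicalSpace.generateFrom
        {s : Set {ξ : X →L[ℝ] ℝ // ‖ξ‖ ≤ 1} |
          ∃ (ξ₀ : {ξ : X →L[ℝ] ℝ // ‖ξ‖ ≤ 1}) (ε : ℝ), 0 < ε ∧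
            s = {η : {ξ : X →L[ℝ] ℝ // ‖ξ‖ ≤ 1} |
              (⨆ x : {x : X // S.lipNorm x ≤ 1}, |ξ₀.1 x.1 - η.1 x.1|) < ε}} := by
  classical
  set B := {ξ : X →L[ℝ] ℝ // ‖ξ‖ ≤ 1}
  set K : Set X := {x : X | S.lipNorm x ≤ 1} with hK
  set f : B → WeakDual ℝ X := fun ξ => StrongDual.toWeakDual ξ.1 with hf
  -- `lipNorm 0 = 0`, so `0 ∈ K` and the index type is nonempty
  have hlip0 : S.lipNorm 0 = 0 := by
    have := S.lipNorm_smul 0 0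
    simpa using this
  have h0K : (0 : X) ∈ K := by simp [hK, hlip0]
  haveI : Nonempty {x : X // S.lipNorm x ≤ 1} := ⟨⟨0, h0K⟩⟩
  -- a uniform bound on the norm of points of `K`
  obtain ⟨M, hM⟩ := S.isCompact_unitBall.isBounded.exists_norm_le
  have hMn : ∀ x : {x : X // S.lipNorm x ≤ 1}, ‖x.1‖ ≤ max M 0 :=
    fun x => le_trans (hM x.1 x.2) (le_max_left _ _)
  -- the "distance"
  set D : B → B → ℝ := fun ξ η => ⨆ x : {x : X // S.lipNorm x ≤ 1}, |ξ.1 x.1 - η.1 x.1|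
    with hD
  have hterm : ∀ (ξ η : B) (x : {x : X // S.lipNorm x ≤ 1}),
      |ξ.1 x.1 - η.1 x.1| ≤ 2 * max M 0 := by
    intro ξ η x
    have : |ξ.1 x.1 - η.1 x.1| = ‖(ξ.1 - η.1) x.1‖ := by
      simp [Real.norm_eq_abs]
    rw [this]
    calc ‖(ξ.1 - η.1) x.1‖ ≤ ‖ξ.1 - η.1‖ * ‖x.1‖ := (ξ.1 - η.1).le_opNorm x.1
      _ ≤ 2 * max M 0 := by
          apply mul_le_mul _ (hMn x) (norm_nonneg _) (by norm_num)
          calc ‖ξ.1 - η.1‖ ≤ ‖ξ.1‖ + ‖η.1‖ := norm_sub_le _ _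
            _ ≤ 2 := by linarith [ξ.2, η.2]
  have hbdd : ∀ ξ η : B,
      BddAbove (Set.range fun x : {x : X // S.lipNorm x ≤ 1} => |ξ.1 x.1 - η.1 x.1|) := by
    intro ξ η
    exact ⟨2 * max M 0, by rintro r ⟨x, rfl⟩; exact hterm ξ η x⟩
  have hle_D : ∀ (ξ η : B) (x : {x : X // S.lipNorm x ≤ 1}),
      |ξ.1 x.1 - η.1 x.1| ≤ D ξ η := fun ξ η x => le_ciSup (hbdd ξ η) x
  have hD_self : ∀ ξ : B, D ξ ξ = 0 := by
    intro ξ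
    simp [hD]
  apply le_antisymm
  · -- every d-ball is weak*-open (uses compactness of K)
    apply le_generateFrom
    rintro s ⟨ξ₀, ε, hε, rfl⟩
    apply inducedOpen_of_forall
    intro η hη
    simp only [Set.mem_setOf_eq] at hη
    set r : ℝ := D ξ₀ η with hr
    set δ : ℝ := (ε - r) / 4 with hδ
    have hr_nonneg : 0 ≤ r := le_trans (by simp) (hle_D ξ₀ η ⟨0, h0K⟩)
    have hδpos : 0 < δ := by
      have : r < ε := hη
      simp only [hδ]
      linarith
    -- finitely many δ-centres covering K
    obtain ⟨t, htK, htcov⟩ := S.isCompact_unitBall.elim_nhds_subcover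
      (fun x => Metric.ball x δ) (fun x _ => Metric.ball_mem_nhds x hδpos)
    refine ⟨⋂ x ∈ t, {φ : WeakDual ℝ X | |φ x - η.1 x| < δ}, ?_, ?_, ?_⟩
    · apply isOpen_biInter_finset
      intro x _
      have hcont : Continuous fun φ : WeakDual ℝ X => |φ x - η.1 x| :=
        ((WeakDual.eval_continuous x).sub continuous_const).abs
      exact isOpen_lt hcont continuous_const
    · simp only [Set.mem_iInter, Set.mem_setOf_eq]
      intro x _
      have h0 : (f η) x - η.1 x = 0 := sub_eq_zero.mpr rfl
      rw [h0, abs_zero]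
      exact hδpos
    · intro ξ hξ
      simp only [Set.mem_preimage, Set.mem_iInter, Set.mem_setOf_eq] at hξ
      -- estimate D ξ₀ ξ ≤ r + 3δ < ε
      simp only [Set.mem_setOf_eq]
      have key : ∀ x : {x : X // S.lipNorm x ≤ 1}, |ξ₀.1 x.1 - ξ.1 x.1| ≤ r + 3 * δ := by
        intro y
        obtain ⟨x, hxt, hxy⟩ : ∃ x ∈ t, y.1 ∈ Metric.ball x δ := by
          have := htcov y.2
          simpa using this
        have h1 : |ξ₀.1 y.1 - η.1 y.1| ≤ r := hle_D ξ₀ η y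
        have hdist : ‖y.1 - x‖ < δ := by
          rw [Metric.mem_ball, dist_eq_norm] at hxy
          exact hxy
        have hηx : |η.1 y.1 - η.1 x| ≤ δ := by
          have : |η.1 y.1 - η.1 x| = ‖η.1 (y.1 - x)‖ := by simp [Real.norm_eq_abs]
          rw [this]
          calc ‖η.1 (y.1 - x)‖ ≤ ‖η.1‖ * ‖y.1 - x‖ := η.1.le_opNorm _
            _ ≤ 1 * δ := mul_le_mul η.2 hdist.le (norm_nonneg _) zero_le_one
            _ = δ := one_mul δ
        have hξx : |ξ.1 x - ξ.1 y.1| ≤ δ := by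
          have : |ξ.1 x - ξ.1 y.1| = ‖ξ.1 (x - y.1)‖ := by simp [Real.norm_eq_abs]
          rw [this]
          calc ‖ξ.1 (x - y.1)‖ ≤ ‖ξ.1‖ * ‖x - y.1‖ := ξ.1.le_opNorm _
            _ ≤ 1 * δ := by
                rw [norm_sub_rev]
                exact mul_le_mul ξ.2 hdist.le (norm_nonneg _) zero_le_one
            _ = δ := one_mul δ
        have h2 : |η.1 x - ξ.1 x| < δ := by
          have := hξ x hxt
          rw [abs_sub_comm]
          exact this
        have A1 : |ξ₀.1 y.1 - ξ.1 y.1| ≤ |ξ₀.1 y.1 - η.1 y.1| + |η.1 y.1 - ξ.1 y.1| :=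
          abs_sub_le _ _ _
        have A2 : |η.1 y.1 - ξ.1 y.1| ≤ |η.1 y.1 - η.1 x| + |η.1 x - ξ.1 y.1| :=
          abs_sub_le _ _ _
        have A3 : |η.1 x - ξ.1 y.1| ≤ |η.1 x - ξ.1 x| + |ξ.1 x - ξ.1 y.1| :=
          abs_sub_le _ _ _
        linarith [h1, hηx, hξx, h2]
      have : D ξ₀ ξ ≤ r + 3 * δ := ciSup_le key
      calc (⨆ x : {x : X // S.lipNorm x ≤ 1}, |ξ₀.1 x.1 - ξ.1 x.1|) = D ξ₀ ξ := rfl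
        _ ≤ r + 3 * δ := this
        _ < ε := by simp only [hδ]; linarith [hη]
  · -- the weak* (induced) topology is coarser than the d-topology:
    -- i.e. `f` is continuous from the d-topology.
    letI tg : TopologicalSpace B := TopologicalSpace.generateFrom
      {s : Set B | ∃ (ξ₀ : B) (ε : ℝ), 0 < ε ∧
        s = {η : B | (⨆ x : {x : X // S.lipNorm x ≤ 1}, |ξ₀.1 x.1 - η.1 x.1|) < ε}}
    rw [← continuous_iff_le_induced (t₁ := tg)]
    apply WeakDual.continuous_of_continuous_eval
    intro x
    -- eval at x is continuous for the d-topology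
    rw [continuous_def]
    intro U hU
    apply genOpen_of_forall
    intro η hη
    have hηU : η.1 x ∈ U := hη
    obtain ⟨ε, hεpos, hball⟩ := Metric.isOpen_iff.1 hU _ hηU
    -- approximate x by a finite-lipNorm element x₀
    obtain ⟨x₀, hx₀fin, hx₀close⟩ : ∃ x₀, S.lipNorm x₀ < ⊤ ∧ ‖x - x₀‖ < ε / 4 := by
      have := Metric.mem_closure_iff.1 (S.dense_finite x) (ε / 4) (by linarith)
      obtain ⟨x₀, hx₀, hd⟩ := this
      exact ⟨x₀, hx₀, by rwa [dist_eq_norm] at hd⟩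
    set c : ℝ := max (S.lipNorm x₀).toReal 1 with hc
    have hc1 : 1 ≤ c := le_max_right _ _
    have hcpos : 0 < c := lt_of_lt_of_le one_pos hc1
    -- `c⁻¹ • x₀ ∈ K`
    have hmem : S.lipNorm (c⁻¹ • x₀) ≤ 1 := by
      rw [S.lipNorm_smul]
      have hlip_le : S.lipNorm x₀ ≤ ENNReal.ofReal c := by
        rw [ENNReal.le_ofReal_iff_toReal_le hx₀fin.ne (le_of_lt hcpos)]
        exact le_max_left _ _
      have hnn : (‖c⁻¹‖₊ : ℝ≥0∞) = ENNReal.ofReal c⁻¹ := by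
        rw [Real.nnnorm_of_nonneg (inv_nonneg.mpr hcpos.le),
          ENNReal.ofReal_eq_coe_nnreal (inv_nonneg.mpr hcpos.le)]
      calc (‖c⁻¹‖₊ : ℝ≥0∞) * S.lipNorm x₀ ≤ ENNReal.ofReal c⁻¹ * ENNReal.ofReal c := by
            rw [hnn]; exact mul_le_mul_right hlip_le _
        _ = ENNReal.ofReal (c⁻¹ * c) := (ENNReal.ofReal_mul (inv_nonneg.mpr hcpos.le)).symm
        _ = 1 := by rw [inv_mul_cancel₀ hcpos.ne']; simp
    set y : {x : X // S.lipNorm x ≤ 1} := ⟨c⁻¹ • x₀, hmem⟩ with hy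
    -- the d-ball around η of radius δ works
    set δ : ℝ := ε / (2 * c) with hδ
    have hδpos : 0 < δ := div_pos hεpos (by positivity)
    refine ⟨{ζ : B | (⨆ z : {x : X // S.lipNorm x ≤ 1}, |η.1 z.1 - ζ.1 z.1|) < δ},
      ⟨η, δ, hδpos, rfl⟩, ?_, ?_⟩
    · show D η η < δ
      rw [hD_self]; exact hδpos
    · intro ζ hζ
      simp only [Set.mem_setOf_eq] at hζ
      apply hball
      rw [Metric.mem_ball, Real.dist_eq]
      -- |ζ x - η x| ≤ 2‖x - x₀‖ + c * D η ζ < ε/2 + c·δ = ε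
      have hx₀bound : |η.1 x₀ - ζ.1 x₀| ≤ c * D η ζ := by
        have h1 : |η.1 y.1 - ζ.1 y.1| ≤ D η ζ := hle_D η ζ y
        have h2 : η.1 y.1 - ζ.1 y.1 = c⁻¹ * (η.1 x₀ - ζ.1 x₀) := by
          simp only [hy]
          rw [map_smul, map_smul]
          simp [smul_eq_mul, mul_sub]
        rw [h2, abs_mul, abs_inv, abs_of_pos hcpos] at h1
        calc |η.1 x₀ - ζ.1 x₀| = c * (c⁻¹ * |η.1 x₀ - ζ.1 x₀|) := by
              field_simp
          _ ≤ c * D η ζ := by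
              apply mul_le_mul_of_nonneg_left h1 hcpos.le
      have hsmall : ∀ ξ : B, |ξ.1 x - ξ.1 x₀| ≤ ε / 4 := by
        intro ξ
        have : |ξ.1 x - ξ.1 x₀| = ‖ξ.1 (x - x₀)‖ := by simp [Real.norm_eq_abs]
        rw [this]
        calc ‖ξ.1 (x - x₀)‖ ≤ ‖ξ.1‖ * ‖x - x₀‖ := ξ.1.le_opNorm _
          _ ≤ 1 * (ε / 4) := mul_le_mul ξ.2 hx₀close.le (norm_nonneg _) zero_le_one
          _ = ε / 4 := one_mul _
      have hcD : c * D η ζ < ε / 2 := by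
        have : D η ζ < δ := hζ
        calc c * D η ζ < c * δ := by
              apply mul_lt_mul_of_pos_left this hcpos
          _ = ε / 2 := by
              simp only [hδ]
              field_simp
      have A1 : |ζ.1 x - η.1 x| ≤ |ζ.1 x - ζ.1 x₀| + |ζ.1 x₀ - η.1 x| := abs_sub_le _ _ _
      have A2 : |ζ.1 x₀ - η.1 x| ≤ |ζ.1 x₀ - η.1 x₀| + |η.1 x₀ - η.1 x| := abs_sub_le _ _ _
      have B1 : |ζ.1 x - ζ.1 x₀| ≤ ε / 4 := hsmall ζ
      have B2 : |η.1 x₀ - η.1 x| ≤ ε / 4 := by rw [abs_sub_comm]; exact hsmall η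
      have B3 : |ζ.1 x₀ - η.1 x₀| ≤ c * D η ζ := by rw [abs_sub_comm]; exact hx₀bound
      show |ζ.1 x - η.1 x| < ε
      linarith
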